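/- Let k ≥ 2 and let χ1,…,χk be primitive characters mod 16 (so all c_i are odd, where χ_i(5) = e^{2πi c_i/4}), and suppose χ1⋯χk is induced by the primitive character mod 4; in particular 4 divides c1+⋯+ck. Set v := (c1+⋯+ck)/4. Then J_4(χ1,…,χk,2^4) = 2^{(4(k−1)+2)/2} · i^{1−v} · ∏_{i=1}^k χ_i(c_i). -/

import Mathlib

open Complex

/-- The generalized Jacobi sum `J_B(χ₁,…,χ_k, q)`. -/
noncomputable def Jsum {q : ℕ} [NeZero q] {k : ℕ}
    (χ : Fin k → DirichletCharacter ℂ q) (B : ZMod q) : ℂ :=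
  ∑ x : Fin k → ZMod q, if (∑ i, x i) = B then ∏ i, χ i (x i) else 0

open Finset

noncomputable def zet : ℂ := Complex.exp (2 * Real.pi * Complex.I / 16)

lemma zet_pow (m : ℕ) : zet ^ m = Complex.exp (m * (2 * Real.pi * Complex.I / 16)) := by
  rw [zet, ← Complex.exp_nat_mul]

lemma zet_pow_16 : zet ^ 16 = 1 := by
  rw [zet_pow, show ((16:ℕ):ℂ) * (2 * Real.pi * Complex.I / 16) = 2 * Real.pi * Complex.I by push_cast; ring]
  exact Complex.exp_two_pi_mul_I

lemma zet_pow_8 : zet ^ 8 = -1 := by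
  rw [zet_pow, show ((8:ℕ):ℂ) * (2 * Real.pi * Complex.I / 16) = Real.pi * Complex.I by push_cast; ring]
  exact Complex.exp_pi_mul_I

lemma zet_pow_4 : zet ^ 4 = Complex.I := by
  rw [zet_pow, show ((4:ℕ):ℂ) * (2 * Real.pi * Complex.I / 16) = ((Real.pi/2 : ℝ):ℂ) * Complex.I by push_cast; ring]
  rw [Complex.exp_mul_I, ← Complex.ofReal_cos, ← Complex.ofReal_sin]
  simp [Real.cos_pi_div_two, Real.sin_pi_div_two]

lemma zet_pow_ne_one {m : ℕ} (h0 : m ≠ 0) (h16 : m < 16) : zet ^ m ≠ 1 := by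
  intro h
  rw [zet_pow, Complex.exp_eq_one_iff] at h
  obtain ⟨n, hn⟩ := h
  rw [show ((m:ℕ):ℂ) * (2 * Real.pi * Complex.I / 16) = (((m:ℝ)/16 : ℝ) : ℂ) * (2 * Real.pi * Complex.I) by push_cast; ring] at hn
  have hpi : (2 * (Real.pi:ℂ) * Complex.I) ≠ 0 := by
    simp [Real.pi_ne_zero, Complex.I_ne_zero]
  have h2 : (((m:ℝ)/16 : ℝ) : ℂ) = (n : ℂ) := by
    rcases mul_eq_mul_right_iff.mp hn with h | h
    · exact h
    · exact absurd h hpi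
  have h3 : (m:ℝ)/16 = (n:ℝ) := by exact_mod_cast h2
  have hm : (m:ℝ) = 16 * n := by linarith
  have : (m:ℤ) = 16 * n := by exact_mod_cast hm
  omega

noncomputable def ee (a : ZMod (2^4)) : ℂ := zet ^ a.val

lemma ee_zero : ee 0 = 1 := by simp [ee]

lemma zet_pow_mod (n : ℕ) : zet ^ (n % 16) = zet ^ n := by
  conv_rhs => rw [← Nat.div_add_mod n 16]
  rw [pow_add, pow_mul, zet_pow_16, one_pow, one_mul]

lemma ee_add (a b : ZMod (2^4)) : ee (a + b) = ee a * ee b := by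
  rw [ee, ee, ee, ← pow_add, ZMod.val_add]
  exact zet_pow_mod _

lemma ee_ne_one {t : ZMod (2^4)} (ht : t ≠ 0) : ee t ≠ 1 := by
  apply zet_pow_ne_one
  · simpa [ZMod.val_eq_zero] using ht
  · exact ZMod.val_lt t

lemma ee_sum_orth (t : ZMod (2^4)) : (∑ a : ZMod (2^4), ee (a * t)) = if t = 0 then 16 else 0 := by
  by_cases ht : t = 0
  · simp [ht, ee_zero]
  · simp only [ht, if_false]
    have key : (∑ a : ZMod (2^4), ee (a * t)) = ee t * ∑ a : ZMod (2^4), ee (a * t) := by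
      conv_lhs => rw [← Fintype.sum_equiv (Equiv.addRight (1 : ZMod (2^4))) _ (fun a => ee (a * t)) (fun a => rfl)]
      rw [Finset.mul_sum]
      congr 1; ext a
      simp only [Equiv.coe_addRight]
      rw [add_mul, one_mul, ee_add, mul_comm]
    have := ee_ne_one ht
    have h2 : (1 - ee t) * (∑ a : ZMod (2^4), ee (a * t)) = 0 := by
      rw [sub_mul, one_mul, ← key, sub_self]
    rcases mul_eq_zero.mp h2 with h | h
    · exact absurd (by linear_combination -h) this
    · exact h

noncomputable def gg (a : ZMod (2^4)) (χ : DirichletCharacter ℂ (2^4)) : ℂ :=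
  ∑ x : ZMod (2^4), χ x * ee (a * x)

-- even a vanishing, given χ 9 = -1
lemma gg_even (χ : DirichletCharacter ℂ (2^4)) (hχ9 : χ 9 = -1) (b : ZMod (2^4)) :
    gg (2 * b) χ = 0 := by
  have h9 : ∀ x : ZMod (2^4), (9 : ZMod (2^4)) * (9 * x) = x := by decide
  have key : gg (2 * b) χ = - gg (2 * b) χ := by
    calc gg (2 * b) χ = ∑ x : ZMod (2^4), χ (9 * x) * ee (2 * b * (9 * x)) := by
          exact Fintype.sum_bijective (fun x => (9:ZMod (2^4)) * x)
            (Function.Involutive.bijective h9) _ _ (fun x => by rw [h9])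
      _ = - gg (2 * b) χ := by
          rw [gg, ← Finset.sum_neg_distrib]
          congr 1; ext x
          rw [map_mul, hχ9, show 2 * b * (9 * x) = 2 * b * x by ring_nf; rw [show (18:ZMod (2^4)) = 2 by decide]]
          ring
  linear_combination key / 2


-- unit shift
lemma gg_unit (χ : DirichletCharacter ℂ (2^4)) (u : (ZMod (2^4))ˣ) :
    gg (↑u) χ = χ ↑u⁻¹ * gg 1 χ := by
  have huu : ∀ y : ZMod (2^4), (↑u : ZMod (2^4)) * ((↑u⁻¹ : ZMod (2^4)) * y) = y := fun y => by
    rw [← mul_assoc, ← Units.val_mul, mul_inv_cancel, Units.val_one, one_mul]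
  rw [gg, gg, Finset.mul_sum]
  symm
  refine Fintype.sum_bijective (fun y => (↑u⁻¹ : ZMod (2^4)) * y)
    (Units.mulLeft_bijective u⁻¹) _ _ (fun y => ?_)
  rw [map_mul, huu y, one_mul]
  ring

lemma ee_fsum {ι : Type*} (s : Finset ι) (f : ι → ZMod (2^4)) :
    ee (∑ i ∈ s, f i) = ∏ i ∈ s, ee (f i) := by
  classical
  induction s using Finset.cons_induction with
  | empty => simp [ee_zero]
  | cons a s ha ih => rw [Finset.sum_cons, Finset.prod_cons, ee_add, ih]

lemma fourierJ {k : ℕ} (χ : Fin k → DirichletCharacter ℂ (2^4)) (B : ZMod (2^4)) :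
    (16 : ℂ) * Jsum χ B = ∑ a : ZMod (2^4), ee (-(a * B)) * ∏ i, gg a (χ i) := by
  have expand : ∀ a : ZMod (2^4), (∏ i, gg a (χ i)) =
      ∑ x : Fin k → ZMod (2^4), ∏ i, (χ i (x i) * ee (a * x i)) := by
    intro a
    exact Fintype.prod_sum (fun i x => χ i x * ee (a * x))
  symm
  calc ∑ a : ZMod (2^4), ee (-(a * B)) * ∏ i, gg a (χ i)
      = ∑ a : ZMod (2^4), ∑ x : Fin k → ZMod (2^4),
          (∏ i, χ i (x i)) * (ee (-(a*B)) * ∏ i, ee (a * x i)) := by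
        refine Finset.sum_congr rfl fun a _ => ?_
        rw [expand a, Finset.mul_sum]
        refine Finset.sum_congr rfl fun x _ => ?_
        rw [Finset.prod_mul_distrib]; ring
    _ = ∑ x : Fin k → ZMod (2^4), (∏ i, χ i (x i)) *
          ∑ a : ZMod (2^4), ee (a * (∑ i, x i) + (-(a*B))) := by
        rw [Finset.sum_comm]
        refine Finset.sum_congr rfl fun x _ => ?_
        rw [Finset.mul_sum]
        refine Finset.sum_congr rfl fun a _ => ?_
        rw [ee_add, show a * (∑ i, x i) = ∑ i, a * x i from Finset.mul_sum _ _ _,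
          ee_fsum]
        ring
    _ = ∑ x : Fin k → ZMod (2^4), (∏ i, χ i (x i)) *
          (if (∑ i, x i) - B = 0 then (16:ℂ) else 0) := by
        refine Finset.sum_congr rfl fun x _ => ?_
        congr 1
        have : ∀ a : ZMod (2^4), a * (∑ i, x i) + (-(a*B)) = a * ((∑ i, x i) - B) := by
          intro a; ring
        simp_rw [this]
        exact ee_sum_orth _
    _ = (16:ℂ) * Jsum χ B := by
        rw [Jsum, Finset.mul_sum]
        refine Finset.sum_congr rfl fun x _ => ?_
        by_cases h : (∑ i, x i) = B
        · simp [h, mul_comm]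
        · simp [h, sub_eq_zero.ne.mpr h]

lemma sum_zmod16 (F : ZMod (2^4) → ℂ) : ∑ a : ZMod (2^4), F a =
    F 0 + F 1 + F 2 + F 3 + F 4 + F 5 + F 6 + F 7 + F 8 + F 9 + F 10 + F 11 + F 12 + F 13 + F 14 + F 15 := by
  rw [show (Finset.univ : Finset (ZMod (2^4))) = {0,1,2,3,4,5,6,7,8,9,10,11,12,13,14,15} from by decide]
  repeat rw [Finset.sum_insert (by decide)]
  rw [Finset.sum_singleton]
  ring

lemma chi_vals (χ : DirichletCharacter ℂ (2^4)) :
    χ 0 = 0 ∧ χ 2 = 0 ∧ χ 4 = 0 ∧ χ 6 = 0 ∧ χ 8 = 0 ∧ χ 10 = 0 ∧ χ 12 = 0 ∧ χ 14 = 0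
    ∧ χ 1 = 1 ∧ χ 9 = χ 5 * χ 5 ∧ χ 13 = χ 5 * (χ 5 * χ 5)
    ∧ χ 11 = χ 15 * χ 5 ∧ χ 7 = χ 15 * (χ 5 * χ 5)
    ∧ χ 3 = χ 15 * (χ 5 * (χ 5 * χ 5)) := by
  refine ⟨?_, ?_, ?_, ?_, ?_, ?_, ?_, ?_, ?_, ?_, ?_, ?_, ?_, ?_⟩
  · exact χ.map_nonunit (by decide)
  · exact χ.map_nonunit (by decide)
  · exact χ.map_nonunit (by decide)
  · exact χ.map_nonunit (by decide)
  · exact χ.map_nonunit (by decide)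
  · exact χ.map_nonunit (by decide)
  · exact χ.map_nonunit (by decide)
  · exact χ.map_nonunit (by decide)
  · exact map_one χ
  · rw [show (9:ZMod (2^4)) = 5 * 5 from by decide, map_mul]
  · rw [show (13:ZMod (2^4)) = 5 * (5 * 5) from by decide, map_mul, map_mul]
  · rw [show (11:ZMod (2^4)) = 15 * 5 from by decide, map_mul]
  · rw [show (7:ZMod (2^4)) = 15 * (5 * 5) from by decide, map_mul, map_mul]
  · rw [show (3:ZMod (2^4)) = 15 * (5 * (5 * 5)) from by decide, map_mul, map_mul, map_mul]

lemma ee_vals : ee 0 = 1 ∧ ee 1 = zet^1 ∧ ee 3 = zet^3 ∧ ee 5 = zet^5 ∧ ee 7 = zet^7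
    ∧ ee 9 = zet^9 ∧ ee 11 = zet^11 ∧ ee 13 = zet^13 ∧ ee 15 = zet^15 := by
  refine ⟨?_, ?_, ?_, ?_, ?_, ?_, ?_, ?_, ?_⟩ <;> rfl

lemma gg1_eval_c1 (χ : DirichletCharacter ℂ (2^4)) (s : ℂ) (hs : χ 15 = s)
    (hI : χ 5 = Complex.I) : gg 1 χ = -4 * s * zet ^ 7 := by
  obtain ⟨h0, h2, h4, h6, h8, h10, h12, h14, h1, h9, h13, h11, h7, h3⟩ := chi_vals χ
  obtain ⟨e0, e1, e3, e5, e7, e9, e11, e13, e15⟩ := ee_vals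
  rw [gg, sum_zmod16]
  simp only [one_mul]
  rw [h0, h2, h4, h6, h8, h10, h12, h14, h1, h9, h13, h11, h7, h3, hs, hI,
    e1, e3, e5, e7, e9, e11, e13, e15]
  have hz8 : zet ^ 8 = -1 := zet_pow_8
  have hz4 : Complex.I = zet ^ 4 := zet_pow_4.symm
  rw [hz4]
  linear_combination (zet * (1 + zet^16) + 4 * s * zet^7) * hz8

lemma gg1_eval_c3 (χ : DirichletCharacter ℂ (2^4)) (s : ℂ) (hs : χ 15 = s)
    (hI : χ 5 = -Complex.I) : gg 1 χ = 4 * zet := by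
  obtain ⟨h0, h2, h4, h6, h8, h10, h12, h14, h1, h9, h13, h11, h7, h3⟩ := chi_vals χ
  obtain ⟨e0, e1, e3, e5, e7, e9, e11, e13, e15⟩ := ee_vals
  rw [gg, sum_zmod16]
  simp only [one_mul]
  rw [h0, h2, h4, h6, h8, h10, h12, h14, h1, h9, h13, h11, h7, h3, hs, hI,
    e1, e3, e5, e7, e9, e11, e13, e15]
  have hz8 : zet ^ 8 = -1 := zet_pow_8
  have hz4 : Complex.I = zet ^ 4 := zet_pow_4.symm
  rw [hz4]
  linear_combination (-3 * zet + 2 * zet^9 - zet^17) * hz8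

lemma mulchar_prod_apply {k : ℕ} (χ : Fin k → DirichletCharacter ℂ (2^4))
    (s : Finset (Fin k)) (u : (ZMod (2^4))ˣ) :
    (∏ i ∈ s, χ i) ↑u = ∏ i ∈ s, χ i ↑u := by
  induction s using Finset.cons_induction with
  | empty => simpa using MulChar.one_apply_coe u
  | cons a s ha ih => rw [Finset.prod_cons, Finset.prod_cons, MulChar.mul_apply, ih]

lemma psi_units : ∀ u : (ZMod 4)ˣ, (u : ZMod 4) = 1 ∨ (u : ZMod 4) = 3 := by decide

lemma psi_three (ψ : DirichletCharacter ℂ 4) (hψ : ψ.IsPrimitive) : ψ 3 = -1 := by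
  have hsq : ψ 3 * ψ 3 = 1 := by
    rw [← map_mul, show (3:ZMod 4) * 3 = 1 from by decide, map_one]
  rcases mul_self_eq_one_iff.mp hsq with h | h
  · exfalso
    have hone : ψ = 1 := by
      apply MulChar.ext
      intro u
      rw [MulChar.one_apply_coe]
      rcases psi_units u with h1 | h1
      · rw [h1, map_one]
      · rw [h1, h]
    have h2 := hψ
    rw [DirichletCharacter.IsPrimitive, hone,
      DirichletCharacter.conductor_one] at h2
    norm_num at h2
  · exact h

lemma Ipow (c : ℕ) : Complex.exp (2 * Real.pi * Complex.I * c / 4) = Complex.I ^ c := by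
  have hI : Complex.I = Complex.exp ((Real.pi/2 : ℝ) * Complex.I) := by
    rw [Complex.exp_mul_I, ← Complex.ofReal_cos, ← Complex.ofReal_sin]
    simp [Real.cos_pi_div_two, Real.sin_pi_div_two]
  calc Complex.exp (2 * Real.pi * Complex.I * c / 4)
      = Complex.exp (c * (((Real.pi/2 : ℝ) : ℂ) * Complex.I)) := by
        congr 1; push_cast; ring
    _ = Complex.exp (((Real.pi/2 : ℝ) : ℂ) * Complex.I) ^ c := (Complex.exp_nat_mul _ c)
    _ = Complex.I ^ c := by rw [← hI]

theorem stmt8 {k : ℕ} (hk : 2 ≤ k)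
    (χ : Fin k → DirichletCharacter ℂ (2 ^ 4))
    -- the c_i with χ_i(5) = e(c_i/4), 1 ≤ c_i ≤ 4
    (c : Fin k → ℕ) (hcrange : ∀ i, 1 ≤ c i ∧ c i ≤ 4)
    (hχ5 : ∀ i, χ i ((5 : ℕ) : ZMod (2 ^ 4)) =
      Complex.exp (2 * Real.pi * Complex.I * (c i) / 4))
    -- all χ_i primitive mod 16, i.e. all c_i odd
    (hprim : ∀ i, (χ i).IsPrimitive) (hcodd : ∀ i, Odd (c i))
    -- χ₁⋯χ_k induced by the primitive character ψ mod 4;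
    -- in particular 4 divides c₁+⋯+c_k
    (ψ : DirichletCharacter ℂ 4) (hψ : ψ.IsPrimitive)
    (hind : ∏ i, χ i = DirichletCharacter.changeLevel (by norm_num : (4:ℕ) ∣ 2 ^ 4) ψ)
    (v : ℕ) (hv : (∑ i, c i) = 4 * v) :
    Jsum χ ((4 : ℕ) : ZMod (2 ^ 4)) =
      (Real.sqrt 2 : ℂ) ^ (4 * (k - 1) + 2) *
        Complex.I ^ ((1 : ℤ) - (v : ℤ)) *
        ∏ i, χ i ((c i : ZMod (2 ^ 4))) := by
  -- basic facts about the c i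
  have hc13 : ∀ i, c i = 1 ∨ c i = 3 := by
    intro i
    have h1 := (hcrange i).1
    have h2 := (hcrange i).2
    obtain ⟨m, hm⟩ := hcodd i
    omega
  -- χ i 5 = I ^ c i
  have ht : ∀ i, χ i (5 : ZMod (2^4)) = Complex.I ^ c i := by
    intro i
    have h := hχ5 i
    rwa [Ipow (c i), show (((5:ℕ) : ZMod (2^4))) = (5 : ZMod (2^4)) from by decide] at h
  -- χ i 9 = -1
  have h9 : ∀ i, χ i (9 : ZMod (2^4)) = -1 := by
    intro i
    rw [show (9 : ZMod (2^4)) = 5 * 5 from by decide, map_mul, ht i, ← pow_add]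
    rcases hc13 i with h | h <;> rw [h]
    · norm_num
    · rw [show (3+3 : ℕ) = 2 * 3 from rfl, pow_mul, Complex.I_sq]
      norm_num
  have hs2 : ∀ i, χ i (15 : ZMod (2^4)) * χ i (15 : ZMod (2^4)) = 1 := by
    intro i
    rw [← map_mul, show (15 : ZMod (2^4)) * 15 = 1 from by decide, map_one]
  have hz8 : zet ^ 8 = -1 := zet_pow_8
  have hz4 : zet ^ 4 = Complex.I := zet_pow_4
  -- per-character Gauss sum value
  have hgg1 : ∀ i, gg 1 (χ i) =
      -4 * χ i ((c i : ℕ) : ZMod (2^4)) * χ i (15 : ZMod (2^4)) * zet ^ (8 - c i) := by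
    intro i
    rcases hc13 i with h | h
    · rw [gg1_eval_c1 (χ i) _ rfl (by rw [ht i, h, pow_one]), h]
      rw [show (((1:ℕ)) : ZMod (2^4)) = 1 from by decide, map_one]
      ring
    · have hI3 : χ i (5 : ZMod (2^4)) = -Complex.I := by
        rw [ht i, h, pow_succ, Complex.I_sq]; ring
      rw [gg1_eval_c3 (χ i) _ rfl hI3, h]
      rw [show (((3:ℕ)) : ZMod (2^4)) = 15 * (5 * (5 * 5)) from by decide,
        map_mul, map_mul, map_mul, hI3]
      rw [show Complex.I = zet ^ 4 from hz4.symm]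
      linear_combination (-4*zet*(zet^8-1)) * hz8 + (-4*zet^17) * (hs2 i)
  -- product of characters at a unit
  have hprod : ∀ u : (ZMod (2^4))ˣ, (∏ i, χ i ↑u) = ψ (ZMod.cast ((u : ZMod (2^4)))) := by
    intro u
    rw [← mulchar_prod_apply χ Finset.univ u, hind]
    exact DirichletCharacter.changeLevel_eq_cast_of_dvd ψ _ u
  set G : ℂ := ∏ i, gg 1 (χ i) with hGdef
  have hodd : ∀ (a b : ZMod (2^4)), a * b = 1 → b * a = 1 →
      (∏ i, gg a (χ i)) = ψ (ZMod.cast b) * G := by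
    intro a b hab hba
    have hu : ∀ i, gg a (χ i) = χ i b * gg 1 (χ i) := fun i =>
      gg_unit (χ i) ⟨a, b, hab, hba⟩
    calc ∏ i, gg a (χ i) = ∏ i, (χ i b * gg 1 (χ i)) :=
          Finset.prod_congr rfl (fun i _ => hu i)
      _ = (∏ i, χ i b) * G := Finset.prod_mul_distrib
      _ = ψ (ZMod.cast b) * G := by
          rw [show (∏ i, χ i b) = ψ (ZMod.cast b) from hprod ⟨b, a, hba, hab⟩]
  have i0 : Fin k := ⟨0, by omega⟩
  have heven : ∀ b : ZMod (2^4), (∏ i, gg (2 * b) (χ i)) = 0 := fun b =>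
    Finset.prod_eq_zero (Finset.mem_univ i0) (gg_even (χ i0) (h9 i0) b)
  have hmain : (16 : ℂ) * Jsum χ ((4:ℕ) : ZMod (2^4)) = -8 * Complex.I * G := by
    rw [fourierJ χ _, sum_zmod16]
    have hev0 : (∏ i, gg (0 : ZMod (2^4)) (χ i)) = 0 := by
      rw [show ((0 : ZMod (2^4))) = 2 * 0 from by decide]; exact heven 0
    have hev2 : (∏ i, gg (2 : ZMod (2^4)) (χ i)) = 0 := by
      rw [show ((2 : ZMod (2^4))) = 2 * 1 from by decide]; exact heven 1
    have hev4 : (∏ i, gg (4 : ZMod (2^4)) (χ i)) = 0 := by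
      rw [show ((4 : ZMod (2^4))) = 2 * 2 from by decide]; exact heven 2
    have hev6 : (∏ i, gg (6 : ZMod (2^4)) (χ i)) = 0 := by
      rw [show ((6 : ZMod (2^4))) = 2 * 3 from by decide]; exact heven 3
    have hev8 : (∏ i, gg (8 : ZMod (2^4)) (χ i)) = 0 := by
      rw [show ((8 : ZMod (2^4))) = 2 * 4 from by decide]; exact heven 4
    have hev10 : (∏ i, gg (10 : ZMod (2^4)) (χ i)) = 0 := by
      rw [show ((10 : ZMod (2^4))) = 2 * 5 from by decide]; exact heven 5
    have hev12 : (∏ i, gg (12 : ZMod (2^4)) (χ i)) = 0 := by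
      rw [show ((12 : ZMod (2^4))) = 2 * 6 from by decide]; exact heven 6
    have hev14 : (∏ i, gg (14 : ZMod (2^4)) (χ i)) = 0 := by
      rw [show ((14 : ZMod (2^4))) = 2 * 7 from by decide]; exact heven 7
    rw [hev0, hev2, hev4, hev6, hev8, hev10, hev12, hev14]
    rw [hodd 1 1 (by decide) (by decide), hodd 3 11 (by decide) (by decide),
      hodd 5 13 (by decide) (by decide), hodd 7 7 (by decide) (by decide),
      hodd 9 9 (by decide) (by decide), hodd 11 3 (by decide) (by decide),
      hodd 13 5 (by decide) (by decide), hodd 15 15 (by decide) (by decide)]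
    rw [show (-((1:ZMod (2^4)) * ((4:ℕ) : ZMod (2^4)))) = (12 : ZMod (2^4)) from by decide]
    rw [show (-((3:ZMod (2^4)) * ((4:ℕ) : ZMod (2^4)))) = (4 : ZMod (2^4)) from by decide]
    rw [show (-((5:ZMod (2^4)) * ((4:ℕ) : ZMod (2^4)))) = (12 : ZMod (2^4)) from by decide]
    rw [show (-((7:ZMod (2^4)) * ((4:ℕ) : ZMod (2^4)))) = (4 : ZMod (2^4)) from by decide]
    rw [show (-((9:ZMod (2^4)) * ((4:ℕ) : ZMod (2^4)))) = (12 : ZMod (2^4)) from by decide]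
    rw [show (-((11:ZMod (2^4)) * ((4:ℕ) : ZMod (2^4)))) = (4 : ZMod (2^4)) from by decide]
    rw [show (-((13:ZMod (2^4)) * ((4:ℕ) : ZMod (2^4)))) = (12 : ZMod (2^4)) from by decide]
    rw [show (-((15:ZMod (2^4)) * ((4:ℕ) : ZMod (2^4)))) = (4 : ZMod (2^4)) from by decide]
    rw [show ee (12 : ZMod (2^4)) = zet ^ 12 from rfl, show ee (4 : ZMod (2^4)) = zet ^ 4 from rfl]
    rw [show (ZMod.cast ((1:ZMod (2^4))) : ZMod 4) = 1 from by decide]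
    rw [show (ZMod.cast ((11:ZMod (2^4))) : ZMod 4) = 3 from by decide]
    rw [show (ZMod.cast ((13:ZMod (2^4))) : ZMod 4) = 1 from by decide]
    rw [show (ZMod.cast ((7:ZMod (2^4))) : ZMod 4) = 3 from by decide]
    rw [show (ZMod.cast ((9:ZMod (2^4))) : ZMod 4) = 1 from by decide]
    rw [show (ZMod.cast ((3:ZMod (2^4))) : ZMod 4) = 3 from by decide]
    rw [show (ZMod.cast ((5:ZMod (2^4))) : ZMod 4) = 1 from by decide]
    rw [show (ZMod.cast ((15:ZMod (2^4))) : ZMod 4) = 3 from by decide]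
    rw [map_one ψ, psi_three ψ hψ]
    have hz12 : zet ^ 12 = -Complex.I := by
      rw [show (12:ℕ) = 8 + 4 from rfl, pow_add, hz8, hz4]; ring
    rw [hz12, hz4]
    ring
  have hJ : Jsum χ ((4:ℕ) : ZMod (2^4)) = -(Complex.I/2) * G := by
    linear_combination hmain / 16
  have hGval : G = (-4:ℂ)^k * (∏ i, χ i ((c i : ℕ) : ZMod (2^4))) *
      (∏ i, χ i (15 : ZMod (2^4))) * zet ^ (∑ i, (8 - c i)) := by
    calc G = ∏ i, (-4 * χ i ((c i : ℕ) : ZMod (2^4)) * χ i (15 : ZMod (2^4)) * zet ^ (8 - c i)) :=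
          Finset.prod_congr rfl (fun i _ => hgg1 i)
      _ = _ := by
          rw [Finset.prod_mul_distrib, Finset.prod_mul_distrib, Finset.prod_mul_distrib,
            Finset.prod_const, Finset.card_univ, Fintype.card_fin,
            Finset.prod_pow_eq_pow_sum]
  have hS : (∏ i, χ i (15 : ZMod (2^4))) = -1 := by
    rw [show (∏ i, χ i (15 : ZMod (2^4))) = ψ (ZMod.cast ((15 : ZMod (2^4)))) from
      hprod ⟨15, 15, by decide, by decide⟩]
    rw [show (ZMod.cast ((15 : ZMod (2^4))) : ZMod 4) = 3 from by decide, psi_three ψ hψ]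
  have h8k : (∑ i, (8 - c i)) + 4 * v = 8 * k := by
    rw [← hv, ← Finset.sum_add_distrib]
    have hci : ∀ i : Fin k, (8 - c i) + c i = 8 := fun i => by
      have := (hcrange i).2; omega
    rw [Finset.sum_congr rfl (fun i _ => hci i), Finset.sum_const, Finset.card_univ,
      Fintype.card_fin, smul_eq_mul, mul_comm]
  have hIvne : (Complex.I ^ v) ≠ 0 := pow_ne_zero _ Complex.I_ne_zero
  have hZ : zet ^ (∑ i, (8 - c i)) = (-1:ℂ)^k * (Complex.I ^ v)⁻¹ := by
    have h1 : zet ^ ((∑ i, (8 - c i)) + 4 * v) = (-1:ℂ)^k := by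
      rw [h8k, pow_mul, hz8]
    rw [pow_add, pow_mul, hz4] at h1
    rw [eq_mul_inv_iff_mul_eq₀ hIvne]
    exact h1
  have h2c : ((Real.sqrt 2 : ℝ) : ℂ)^2 = 2 := by
    rw [← Complex.ofReal_pow, Real.sq_sqrt (by norm_num : (0:ℝ) ≤ 2)]; norm_num
  have hsq2 : ((Real.sqrt 2 : ℝ) : ℂ)^(4*(k-1)+2) = 2^(2*(k-1)+1) := by
    rw [show 4*(k-1)+2 = 2*(2*(k-1)+1) by ring, pow_mul, h2c]
  have hIz : Complex.I ^ ((1:ℤ) - (v:ℤ)) = Complex.I * (Complex.I^v)⁻¹ := by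
    rw [zpow_sub₀ Complex.I_ne_zero, zpow_one, zpow_natCast, div_eq_mul_inv]
  have h4k : (4:ℂ)^k = 2 * 2^(2*(k-1)+1) := by
    rw [show (4:ℂ) = 2^2 by norm_num, ← pow_mul, show 2*k = (2*(k-1)+1)+1 by omega, pow_succ]
    ring
  have hm4 : ((-4:ℂ))^k * (-1:ℂ)^k = (4:ℂ)^k := by rw [← mul_pow]; norm_num
  rw [hJ, hGval, hS, hZ, hsq2, hIz]
  linear_combination (Complex.I/2 * (∏ i, χ i ((c i : ℕ) : ZMod (2^4))) * (Complex.I^v)⁻¹) * hm4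
    + (Complex.I/2 * (∏ i, χ i ((c i : ℕ) : ZMod (2^4))) * (Complex.I^v)⁻¹) * h4k
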